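/- Let h > 0 and let u solve BVP(h). Then u(0) ≥ c_* − (L·h/κ_L)·r(c_*) − (h²/κ)·r(c_*). -/

import Mathlib

open Set MeasureTheory intervalIntegral Filter
open Topology

/-- `u` (with derivative `u'` and second derivative `u''`) solves the boundary value
problem BVP(h): `(κ/h²)·u'' = r(u)` on `[0,1]`, `u'(0) = 0`,
`u(1) + (L·κ/(κ_L·h))·u'(1) = c_*`. -/
def SolvesBVP (κ κL L cstar : ℝ) (r : ℝ → ℝ) (h : ℝ)
    (u u' u'' : ℝ → ℝ) : Prop :=
  (∀ y ∈ Icc (0:ℝ) 1, HasDerivWithinAt u (u' y) (Icc (0:ℝ) 1) y) ∧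
  (∀ y ∈ Icc (0:ℝ) 1, HasDerivWithinAt u' (u'' y) (Icc (0:ℝ) 1) y) ∧
  ContinuousOn u'' (Icc (0:ℝ) 1) ∧
  (∀ y ∈ Icc (0:ℝ) 1, (κ / h ^ 2) * u'' y = r (u y)) ∧
  u' 0 = 0 ∧
  u 1 + (L * κ / (κL * h)) * u' 1 = cstar

/-- If the one-sided/within derivative at `x` is positive, then `f` exceeds `f x`
shortly after `x` within `s`. -/
lemma slope_pos_after {f : ℝ → ℝ} {f' x : ℝ} {s : Set ℝ}
    (hf : HasDerivWithinAt f f' s x) (hpos : 0 < f') :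
    ∃ ε > 0, ∀ y ∈ s, x < y → y < x + ε → f x < f y := by
  have ht := hasDerivWithinAt_iff_tendsto_slope.1 hf
  have hev : ∀ᶠ y in 𝓝[s \ {x}] x, 0 < slope f x y := ht.eventually (eventually_gt_nhds hpos)
  rw [eventually_nhdsWithin_iff] at hev
  obtain ⟨ε, hε, hball⟩ := Metric.eventually_nhds_iff.1 hev
  refine ⟨ε, hε, fun y hy hxy hyε => ?_⟩
  have hd : dist y x < ε := by
    rw [Real.dist_eq, abs_of_pos (by linarith)]; linarith
  have hyne : y ∉ ({x} : Set ℝ) := by simp [hxy.ne']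
  have hs := hball hd ⟨hy, hyne⟩
  rw [slope_def_field] at hs
  rcases div_pos_iff.1 hs with ⟨h1, _⟩ | ⟨_, h2⟩ <;> linarith

/-- If the within derivative at `x` is negative, then `f` exceeds `f x`
shortly before `x` within `s`. -/
lemma slope_neg_before {f : ℝ → ℝ} {f' x : ℝ} {s : Set ℝ}
    (hf : HasDerivWithinAt f f' s x) (hneg : f' < 0) :
    ∃ ε > 0, ∀ y ∈ s, x - ε < y → y < x → f x < f y := by
  have ht := hasDerivWithinAt_iff_tendsto_slope.1 hf
  have hev : ∀ᶠ y in 𝓝[s \ {x}] x, slope f x y < 0 := ht.eventually (eventually_lt_nhds hneg)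
  rw [eventually_nhdsWithin_iff] at hev
  obtain ⟨ε, hε, hball⟩ := Metric.eventually_nhds_iff.1 hev
  refine ⟨ε, hε, fun y hy hyε hxy => ?_⟩
  have hd : dist y x < ε := by
    rw [Real.dist_eq, abs_of_neg (by linarith)]; linarith
  have hyne : y ∉ ({x} : Set ℝ) := by simp [hxy.ne]
  have hs := hball hd ⟨hy, hyne⟩
  rw [slope_def_field] at hs
  rcases div_neg_iff.1 hs with ⟨_, h1⟩ | ⟨h2, _⟩ <;> linarith

theorem BVP_lower_bound_at_zero
    (κ κL L cstar : ℝ) (hκ : 0 < κ) (hκL : 0 < κL) (hL : 0 < L) (hc : 0 < cstar)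
    (r : ℝ → ℝ) (hr : ContDiff ℝ 1 r) (hrsign : ∀ s : ℝ, s ≠ 0 → s * r s > 0)
    (hr' : ∀ s : ℝ, 0 ≤ deriv r s)
    (h : ℝ) (hh : 0 < h) (u u' u'' : ℝ → ℝ)
    (hu : SolvesBVP κ κL L cstar r h u u' u'') :
    u 0 ≥ cstar - (L * h / κL) * r cstar - (h ^ 2 / κ) * r cstar := by
  obtain ⟨hd1, hd2, hcont'', heq, hu'0, hbc⟩ := hu
  have hκ0 : κ ≠ 0 := hκ.ne'
  have hh0 : h ≠ 0 := hh.ne'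
  -- rewritten ODE
  have heq' : ∀ y ∈ Icc (0:ℝ) 1, u'' y = h ^ 2 / κ * r (u y) := by
    intro y hy
    have e1 := heq y hy
    field_simp at e1 ⊢
    linear_combination e1
  -- continuity
  have hcu : ContinuousOn u (Icc (0:ℝ) 1) := fun y hy => (hd1 y hy).continuousWithinAt
  have hcu' : ContinuousOn u' (Icc (0:ℝ) 1) := fun y hy => (hd2 y hy).continuousWithinAt
  -- interior derivatives
  have hdu : ∀ x ∈ Ioo (0:ℝ) 1, HasDerivAt u (u' x) x := fun x hx =>
    (hd1 x (Ioo_subset_Icc_self hx)).hasDerivAt (Icc_mem_nhds hx.1 hx.2)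
  have hdu' : ∀ x ∈ Ioo (0:ℝ) 1, HasDerivAt u' (u'' x) x := fun x hx =>
    (hd2 x (Ioo_subset_Icc_self hx)).hasDerivAt (Icc_mem_nhds hx.1 hx.2)
  -- properties of r
  have hrdiff : Differentiable ℝ r := hr.differentiable one_ne_zero
  have hrmono : Monotone r := monotone_of_deriv_nonneg hrdiff hr'
  have hrpos : ∀ s : ℝ, 0 < s → 0 < r s := by
    intro s hs
    have := hrsign s hs.ne'
    nlinarith
  have hrc : 0 < r cstar := hrpos cstar hc
  -- Step 1 : u ≤ cstar on [0,1]
  have hub : ∀ y ∈ Icc (0:ℝ) 1, u y ≤ cstar := by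
    by_contra hB
    push_neg at hB
    obtain ⟨z, hz, hzgt⟩ := hB
    obtain ⟨y0, hy0, hmax⟩ := isCompact_Icc.exists_isMaxOn (nonempty_Icc.2 zero_le_one) hcu
    have hy0gt : cstar < u y0 := lt_of_lt_of_le hzgt (hmax hz)
    rcases eq_or_lt_of_le hy0.2 with h1 | hlt1
    · -- maximum at the right endpoint
      have hu1 : cstar < u 1 := by rw [h1] at hy0gt; exact hy0gt
      have hneg : u' 1 < 0 := by nlinarith [mul_pos (mul_pos hL hκ) (mul_pos hκL hh),
        (div_pos (mul_pos hL hκ) (mul_pos hκL hh))]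
      obtain ⟨ε, hε, hbefore⟩ := slope_neg_before (hd1 1 ⟨zero_le_one, le_rfl⟩) hneg
      set y : ℝ := max (1 - ε / 2) (1 / 2) with hy
      have hy01 : y ∈ Icc (0:ℝ) 1 := by
        constructor
        · exact le_trans (by norm_num) (le_max_right _ _)
        · apply max_le <;> [linarith; norm_num]
      have hylt : y < 1 := by
        apply max_lt <;> [linarith; norm_num]
      have := hbefore y hy01 (lt_of_lt_of_le (by linarith) (le_max_left _ _)) hylt
      have := hmax hy01
      rw [h1] at hmax
      have := hmax hy01
      simp only [mem_setOf_eq] at this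
      linarith [hbefore y hy01 (lt_of_lt_of_le (by linarith) (le_max_left _ _)) hylt]
    · -- maximum with y0 < 1
      have hderiv0 : u' y0 = 0 := by
        rcases eq_or_lt_of_le hy0.1 with h0 | hgt0
        · rw [← h0]; exact hu'0
        · have hmem : Icc (0:ℝ) 1 ∈ 𝓝 y0 := Icc_mem_nhds hgt0 hlt1
          exact (hmax.isLocalMax hmem).hasDerivAt_eq_zero (hdu y0 ⟨hgt0, hlt1⟩)
      have hupos : 0 < u'' y0 := by
        rw [heq' y0 hy0]
        have : 0 < r (u y0) := hrpos _ (lt_trans hc hy0gt)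
        positivity
      have hder : HasDerivWithinAt u' (u'' y0) (Icc (0:ℝ) 1) y0 := hd2 y0 hy0
      obtain ⟨ε, hε, hafter⟩ := by
        have := slope_pos_after hder hupos
        rwa [hderiv0] at this
      -- u' > 0 on (y0, b), where b := min (y0 + ε/2) 1
      set b : ℝ := min (y0 + ε / 2) 1 with hb
      have hy0b : y0 < b := lt_min (by linarith) hlt1
      have hb1 : b ≤ 1 := min_le_right _ _
      have hupos' : ∀ x ∈ Ioo y0 b, 0 < u' x := by
        intro x hx
        have hx01 : x ∈ Icc (0:ℝ) 1 := ⟨le_trans hy0.1 hx.1.le, le_trans hx.2.le hb1⟩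
        exact hafter x hx01 hx.1 (lt_of_lt_of_le hx.2 (le_trans (min_le_left _ _) (by linarith)))
      have hsub : Icc y0 b ⊆ Icc (0:ℝ) 1 := Icc_subset_Icc hy0.1 hb1
      have hsm : StrictMonoOn u (Icc y0 b) := by
        apply strictMonoOn_of_hasDerivWithinAt_pos (convex_Icc y0 b) (hcu.mono hsub)
          (f' := u')
        · intro x hx
          rw [interior_Icc] at hx
          have hx01 : x ∈ Ioo (0:ℝ) 1 :=
            ⟨lt_of_le_of_lt hy0.1 hx.1, lt_of_lt_of_le hx.2 hb1⟩
          exact (hdu x hx01).hasDerivWithinAt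
        · intro x hx
          rw [interior_Icc] at hx
          exact hupos' x hx
      have hlt : u y0 < u b := hsm ⟨le_rfl, hy0b.le⟩ ⟨hy0b.le, le_rfl⟩ hy0b
      have := hmax (hsub ⟨hy0b.le, le_rfl⟩)
      simp only [mem_setOf_eq] at this
      linarith
  -- Step 2 : bound u''
  set C : ℝ := h ^ 2 / κ * r cstar with hC
  have hCpos : 0 < C := by positivity
  have hu''le : ∀ y ∈ Icc (0:ℝ) 1, u'' y ≤ C := by
    intro y hy
    rw [heq' y hy, hC]
    have : r (u y) ≤ r cstar := hrmono (hub y hy)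
    have hM : (0:ℝ) ≤ h ^ 2 / κ := by positivity
    exact mul_le_mul_of_nonneg_left this hM
  -- Step 3 : u' y ≤ C * y on [0,1]
  have hu'le : ∀ y ∈ Icc (0:ℝ) 1, u' y ≤ C * y := by
    have hmono : MonotoneOn (fun y => C * y - u' y) (Icc (0:ℝ) 1) := by
      apply monotoneOn_of_deriv_nonneg (convex_Icc 0 1)
      · exact (continuousOn_const.mul continuousOn_id).sub hcu'
      · intro x hx
        rw [interior_Icc] at hx
        exact (((hasDerivAt_id x).const_mul C).sub (hdu' x hx)).differentiableAt.differentiableWithinAt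
      · intro x hx
        rw [interior_Icc] at hx
        have hd : HasDerivAt (fun y => C * y - u' y) (C * 1 - u'' x) x :=
          ((hasDerivAt_id x).const_mul C).sub (hdu' x hx)
        rw [hd.deriv]
        have := hu''le x (Ioo_subset_Icc_self hx)
        linarith
    intro y hy
    have := hmono (left_mem_Icc.2 zero_le_one) hy hy.1
    simp only [mul_zero, hu'0, sub_zero, zero_sub, neg_nonpos] at this
    linarith [this]
  -- Step 4 : u 1 - u 0 ≤ C
  have hstep4 : u 1 - u 0 ≤ C := by
    have hmono : MonotoneOn (fun y => C * y - u y) (Icc (0:ℝ) 1) := by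
      apply monotoneOn_of_deriv_nonneg (convex_Icc 0 1)
      · exact (continuousOn_const.mul continuousOn_id).sub hcu
      · intro x hx
        rw [interior_Icc] at hx
        exact (((hasDerivAt_id x).const_mul C).sub (hdu x hx)).differentiableAt.differentiableWithinAt
      · intro x hx
        rw [interior_Icc] at hx
        have hd : HasDerivAt (fun y => C * y - u y) (C * 1 - u' x) x :=
          ((hasDerivAt_id x).const_mul C).sub (hdu x hx)
        rw [hd.deriv]
        have h1 := hu'le x (Ioo_subset_Icc_self hx)
        nlinarith [hx.2, hCpos]
    have := hmono (left_mem_Icc.2 zero_le_one) (right_mem_Icc.2 zero_le_one) zero_le_one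
    simp only [mul_zero, mul_one] at this
    linarith
  -- Step 5 : conclude
  have hu'1 : u' 1 ≤ C := by
    have := hu'le 1 (right_mem_Icc.2 zero_le_one)
    linarith
  have hβ : 0 < L * κ / (κL * h) := div_pos (mul_pos hL hκ) (mul_pos hκL hh)
  have hβC : L * κ / (κL * h) * C = L * h / κL * r cstar := by
    rw [hC]; field_simp
  nlinarith [mul_le_mul_of_nonneg_left hu'1 hβ.le, hbc, hstep4, hβC]
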